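/- Let L be a bi-Lagrangian subspace for the pencil generated by alternating forms A and B on V. Then: (i) L contains the kernel of every regular member of the pencil, so L contains the core K, defined as the sum of the subspaces ker(A + λ·B) over all λ ∈ ℂ with rank(A + λ·B) = r, together with ker B in case rank B = r; and (ii) for every regular member A_μ of the pencil, L is contained in the A_μ-orthogonal complement of K, i.e. A_μ(v, u) = 0 for all v ∈ L and u ∈ K. -/
import Mathlib


open Module

/-- The core subspace of the pencil `{A + λ • B}` of rank `r`: the sum of the kernels
of all regular members of the pencil (including `B`, the member at `λ = ∞`, in case
`B` is regular). -/
noncomputable def core {V : Type*} [AddCommGroup V] [Module ℂ V] [FiniteDimensional ℂ V]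
    (A B : V →ₗ[ℂ] V →ₗ[ℂ] ℂ) (r : ℕ) : Submodule ℂ V :=
  (⨆ l : {l : ℂ // finrank ℂ (LinearMap.range (A + l • B)) = r},
      LinearMap.ker (A + (l : ℂ) • B)) ⊔
  ⨆ _ : finrank ℂ (LinearMap.range B) = r, LinearMap.ker B

/-- Key lemma: if `C` is an alternating form of rank `r`, and `L` is `C`-isotropic
of dimension `finrank V - r/2`, then `ker C ≤ L`. -/
lemma ker_le_of_isotropic {V : Type*} [AddCommGroup V] [Module ℂ V] [FiniteDimensional ℂ V]
    (C : V →ₗ[ℂ] V →ₗ[ℂ] ℂ) (hC : ∀ v, C v v = 0)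
    (L : Submodule ℂ V) (hL : ∀ u ∈ L, ∀ v ∈ L, C u v = 0)
    (r : ℕ) (hr : finrank ℂ (LinearMap.range C) = r)
    (hLdim : 2 * (finrank ℂ V - finrank ℂ L) = r) :
    LinearMap.ker C ≤ L := by
  have hskew : ∀ u v, C u v = - C v u := by
    intro u v
    have h := hC (u + v)
    simp only [map_add, LinearMap.add_apply, hC] at h
    linear_combination h
  set M := L ⊔ LinearMap.ker C with hM
  have hMzero : ∀ u ∈ M, ∀ v ∈ M, C u v = 0 := by
    intro u hu v hv
    obtain ⟨x, hx, k, hk, rfl⟩ := Submodule.mem_sup.mp hu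
    obtain ⟨y, hy, k', hk', rfl⟩ := Submodule.mem_sup.mp hv
    have hk0 : C k = 0 := hk
    have hk'0 : C k' = 0 := hk'
    have h1 : C x k' = 0 := by rw [hskew x k', hk'0]; simp
    simp [map_add, LinearMap.add_apply, hk0, h1, hL x hx y hy]
  have hkerM : LinearMap.ker C ≤ M := le_sup_right
  set ψ : M →ₗ[ℂ] Module.Dual ℂ V := C.domRestrict M with hψ
  have hrange : LinearMap.range ψ ≤ M.dualAnnihilator := by
    rintro _ ⟨x, rfl⟩
    rw [Submodule.mem_dualAnnihilator]
    intro w hw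
    exact hMzero x x.2 w hw
  have hker : LinearMap.ker ψ = (LinearMap.ker C).comap M.subtype := by
    ext x
    simp [hψ, LinearMap.mem_ker]
  have e1 : finrank ℂ (LinearMap.range ψ) + finrank ℂ (LinearMap.ker ψ) = finrank ℂ M :=
    LinearMap.finrank_range_add_finrank_ker ψ
  have e2 : finrank ℂ (LinearMap.ker ψ) = finrank ℂ (LinearMap.ker C) := by
    rw [hker]
    exact (Submodule.comapSubtypeEquivOfLe hkerM).finrank_eq
  have e3 : finrank ℂ (LinearMap.range ψ) ≤ finrank ℂ M.dualAnnihilator :=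
    Submodule.finrank_mono hrange
  have e4 : finrank ℂ M.dualAnnihilator + finrank ℂ M = finrank ℂ V := by
    rw [← (Subspace.quotEquivAnnihilator M).finrank_eq]
    exact Submodule.finrank_quotient_add_finrank M
  have e5 : finrank ℂ (LinearMap.range C) + finrank ℂ (LinearMap.ker C) = finrank ℂ V :=
    LinearMap.finrank_range_add_finrank_ker C
  have e6 : finrank ℂ L ≤ finrank ℂ V := Submodule.finrank_le L
  have e7 : finrank ℂ L ≤ finrank ℂ M := Submodule.finrank_mono le_sup_left
  have hle : finrank ℂ M ≤ finrank ℂ L := by omega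
  have hLM : L = M := Submodule.eq_of_le_of_finrank_le le_sup_left hle
  rw [hLM]
  exact hkerM

/-- **A bi-Lagrangian subspace lies between the core and the mantle.**
A bi-Lagrangian subspace `L` for the pencil `{A + λ • B}` contains the kernel of every
regular member of the pencil (hence contains the core `K`), and for every regular member
`A_μ` of the pencil, `L` is contained in the `A_μ`-orthogonal complement of `K`. -/
theorem biLagrangian_between_core_and_mantle
    {V : Type*} [AddCommGroup V] [Module ℂ V] [FiniteDimensional ℂ V]
    (A B : V →ₗ[ℂ] V →ₗ[ℂ] ℂ)
    (hA : ∀ v, A v v = 0) (hB : ∀ v, B v v = 0)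
    (r : ℕ)
    (hrB : finrank ℂ (LinearMap.range B) ≤ r)
    (hrA : ∀ l : ℂ, finrank ℂ (LinearMap.range (A + l • B)) ≤ r)
    (hrmax : r = finrank ℂ (LinearMap.range B) ∨
      ∃ l : ℂ, r = finrank ℂ (LinearMap.range (A + l • B)))
    (L : Submodule ℂ V)
    (hLA : ∀ u ∈ L, ∀ v ∈ L, A u v = 0)
    (hLB : ∀ u ∈ L, ∀ v ∈ L, B u v = 0)
    (hLdim : 2 * (finrank ℂ V - finrank ℂ L) = r) :
    (∀ l : ℂ, finrank ℂ (LinearMap.range (A + l • B)) = r →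
        LinearMap.ker (A + l • B) ≤ L) ∧
    (finrank ℂ (LinearMap.range B) = r → LinearMap.ker B ≤ L) ∧
    core A B r ≤ L ∧
    (∀ μ : ℂ, finrank ℂ (LinearMap.range (A + μ • B)) = r →
      ∀ v ∈ L, ∀ u ∈ core A B r, (A + μ • B) v u = 0) ∧
    (finrank ℂ (LinearMap.range B) = r →
      ∀ v ∈ L, ∀ u ∈ core A B r, B v u = 0) := by
  have part1 : ∀ l : ℂ, finrank ℂ (LinearMap.range (A + l • B)) = r →
      LinearMap.ker (A + l • B) ≤ L := by
    intro l hl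
    refine ker_le_of_isotropic (A + l • B) ?_ L ?_ r hl hLdim
    · intro v
      simp [LinearMap.add_apply, LinearMap.smul_apply, hA, hB]
    · intro u hu v hv
      simp [LinearMap.add_apply, LinearMap.smul_apply, hLA u hu v hv, hLB u hu v hv]
  have part2 : finrank ℂ (LinearMap.range B) = r → LinearMap.ker B ≤ L :=
    fun h => ker_le_of_isotropic B hB L hLB r h hLdim
  have part3 : core A B r ≤ L := by
    apply sup_le
    · exact iSup_le fun l => part1 l l.2
    · exact iSup_le fun h => part2 h
  refine ⟨part1, part2, part3, ?_, ?_⟩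
  · intro μ _ v hv u hu
    have huL := part3 hu
    simp [LinearMap.add_apply, LinearMap.smul_apply, hLA v hv u huL, hLB v hv u huL]
  · intro _ v hv u hu
    exact hLB v hv u (part3 hu)
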